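/- arXiv:math/0012031 — 7 statements merged into one kernel-verified Lean document; each statement's English description precedes it below -/
import Mathlib

section
/- Let A be an associative ring with 1 and let M be an invertible n×n matrix over A[[z]] whose constant-coefficient matrix is the identity (i.e. M ≡ 1 modulo z). Then there exists a finite product E of transvection matrices over A[[z]] (matrices of the form 1 + c·E_{ij} with i ≠ j and c ∈ A[[z]]) such that E·M is upper triangular and every diagonal entry of E·M is a Witt vector, i.e. a power series with constant coefficient 1 (necessarily a unit of A[[z]]). -/
section Aux

variable {A : Type*} [Ring A] {n : ℕ}

private def Done (t : ℕ) (N : Matrix (Fin n) (Fin n) (PowerSeries A)) : Prop :=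
  ∀ i j : Fin n, j < i → (j : ℕ) * n + (i : ℕ) < t → N i j = 0

private lemma idx_inj {i j i' j' : Fin n}
    (h : (j : ℕ) * n + (i : ℕ) = (j' : ℕ) * n + (i' : ℕ)) : i = i' ∧ j = j' := by
  have hi := i.isLt
  have hi' := i'.isLt
  have h1 : ((j : ℕ) * n + (i : ℕ)) % n = (i : ℕ) := by
    rw [mul_comm, Nat.mul_add_mod]; exact Nat.mod_eq_of_lt hi
  have h2 : ((j' : ℕ) * n + (i' : ℕ)) % n = (i' : ℕ) := by
    rw [mul_comm, Nat.mul_add_mod]; exact Nat.mod_eq_of_lt hi'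
  have hieq : (i : ℕ) = (i' : ℕ) := by rw [← h1, ← h2, h]
  have hjeq : (j : ℕ) = (j' : ℕ) := by
    have hn : 0 < n := Nat.pos_of_ne_zero (by omega)
    nlinarith
  exact ⟨Fin.ext hieq, Fin.ext hjeq⟩

private lemma elim_step :
    ∀ m t : ℕ, n * n - t ≤ m →
    ∀ N : Matrix (Fin n) (Fin n) (PowerSeries A),
      N.map (PowerSeries.constantCoeff (R := A)) = 1 → Done t N →
      ∃ L : List (Matrix (Fin n) (Fin n) (PowerSeries A)),
        (∀ T ∈ L, ∃ (i j : Fin n) (c : PowerSeries A),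
          i ≠ j ∧ T = 1 + Matrix.single i j c) ∧
        ((L.prod * N).map (PowerSeries.constantCoeff (R := A)) = 1) ∧
        Done (n * n) (L.prod * N) := by
  intro m
  induction m with
  | zero =>
    intro t ht N hmap hdone
    exact ⟨[], by simp, by simpa using hmap,
      fun i j hji hlt => by simpa using hdone i j hji (by omega)⟩
  | succ m ih =>
    intro t ht N hmap hdone
    by_cases htn : n * n ≤ t
    · exact ⟨[], by simp, by simpa using hmap,
        fun i j hji hlt => by simpa using hdone i j hji (by omega)⟩
    · have hn : 0 < n := by
        rcases Nat.eq_zero_or_pos n with h | h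
        · exfalso; rw [h] at htn; omega
        · exact h
      set i : Fin n := ⟨t % n, Nat.mod_lt _ hn⟩ with hidef
      set j : Fin n := ⟨t / n, by
        apply Nat.div_lt_of_lt_mul; omega⟩ with hjdef
      have hidx : (j : ℕ) * n + (i : ℕ) = t := by
        simpa [hidef, hjdef, mul_comm] using Nat.div_add_mod t n
      have hc0 : ∀ a b : Fin n, a ≠ b →
          PowerSeries.constantCoeff (R := A) (N a b) = 0 := by
        intro a b hab
        have := congrFun (congrFun hmap a) b
        simpa [Matrix.map_apply, Matrix.one_apply, hab] using this
      have hc1 : ∀ a : Fin n, PowerSeries.constantCoeff (R := A) (N a a) = 1 := by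
        intro a
        have := congrFun (congrFun hmap a) a
        simpa [Matrix.map_apply, Matrix.one_apply] using this
      by_cases hji : j < i
      · -- eliminate the entry (i, j) using the pivot at (j, j)
        have hu : IsUnit (N j j) :=
          PowerSeries.isUnit_iff_constantCoeff.mpr ((hc1 j) ▸ isUnit_one)
        set c : PowerSeries A := -(N i j * (↑hu.unit⁻¹ : PowerSeries A)) with hcdef
        set T : Matrix (Fin n) (Fin n) (PowerSeries A) :=
          1 + Matrix.single i j c with hTdef
        have key : ∀ r s, (T * N) r s = N r s + (if r = i then c * N j s else 0) := by
          intro r s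
          rw [hTdef, add_mul, one_mul, Matrix.add_apply]
          congr 1
          by_cases hr : r = i
          · subst hr
            rw [Matrix.single_mul_apply_same, if_pos rfl]
          · rw [Matrix.single_mul_apply_of_ne (h := hr), if_neg hr]
        have hcc : PowerSeries.constantCoeff (R := A) c = 0 := by
          rw [hcdef, map_neg, map_mul, hc0 i j hji.ne', zero_mul, neg_zero]
        have hmap' : (T * N).map (PowerSeries.constantCoeff (R := A)) = 1 := by
          rw [← hmap]
          ext a b
          rw [Matrix.map_apply, Matrix.map_apply, key]
          by_cases ha : a = i
          · rw [if_pos ha, map_add, map_mul, hcc, zero_mul, add_zero]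
          · rw [if_neg ha, add_zero]
        have hzero : (T * N) i j = 0 := by
          rw [key, if_pos rfl, hcdef, neg_mul, mul_assoc, IsUnit.val_inv_mul,
            mul_one, add_neg_cancel]
        have hdone' : Done (t + 1) (T * N) := by
          intro i' j' h1 h2
          rcases Nat.lt_succ_iff_lt_or_eq.mp h2 with h | h
          · rw [key]
            by_cases hi' : i' = i
            · subst hi'
              have hjj : (j' : ℕ) < (j : ℕ) :=
                Nat.lt_of_mul_lt_mul_right
                  (show (j' : ℕ) * n < (j : ℕ) * n by omega)
              have hj'j : j' < j := hjj
              have e1 : N i j' = 0 := hdone i j' h1 (by omega)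
              have e2 : N j j' = 0 := hdone j j' hj'j (by
                have : (j : ℕ) < (i : ℕ) := hji
                omega)
              rw [e1, e2, mul_zero, if_pos rfl, add_zero]
            · rw [if_neg hi', add_zero]
              exact hdone i' j' h1 (by omega)
          · obtain ⟨hie, hje⟩ := idx_inj (h.trans hidx.symm)
            rw [hie, hje]
            exact hzero
        obtain ⟨L, hs, hm, hd⟩ := ih (t + 1) (by omega) (T * N) hmap' hdone'
        refine ⟨L ++ [T], ?_, ?_, ?_⟩
        · intro T' hT'
          rcases List.mem_append.mp hT' with h | h
          · exact hs T' h
          · rw [List.mem_singleton.mp h]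
            exact ⟨i, j, c, hji.ne', rfl⟩
        · rw [List.prod_append, List.prod_singleton, mul_assoc]
          exact hm
        · rw [List.prod_append, List.prod_singleton, mul_assoc]
          exact hd
      · -- the position (i, j) is not below the diagonal; just move on
        have hdone' : Done (t + 1) N := by
          intro i' j' h1 h2
          rcases Nat.lt_succ_iff_lt_or_eq.mp h2 with h | h
          · exact hdone i' j' h1 h
          · obtain ⟨hie, hje⟩ := idx_inj (h.trans hidx.symm)
            exact absurd (hje ▸ hie ▸ h1) hji
        exact ih (t + 1) (by omega) N hmap hdone'

end Aux

theorem reduction_to_triangular_with_witt_vector_diagonal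
    (A : Type*) [Ring A] (n : ℕ) (M : Matrix (Fin n) (Fin n) (PowerSeries A))
    (hM : IsUnit M) (h0 : M.map (PowerSeries.constantCoeff (R := A)) = 1) :
    ∃ L : List (Matrix (Fin n) (Fin n) (PowerSeries A)),
      (∀ T ∈ L, ∃ (i j : Fin n) (c : PowerSeries A),
        i ≠ j ∧ T = 1 + Matrix.single i j c) ∧
      (∀ i j : Fin n, j < i → (L.prod * M) i j = 0) ∧
      (∀ i : Fin n,
        PowerSeries.constantCoeff (R := A) ((L.prod * M) i i) = 1 ∧
        IsUnit ((L.prod * M) i i)) := by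
  obtain ⟨L, hshape, hmap, hdone⟩ :=
    elim_step (n * n) 0 (by omega) M h0 (fun i j _ h => absurd h (Nat.not_lt_zero _))
  refine ⟨L, hshape, ?_, ?_⟩
  · intro i j hji
    exact hdone i j hji (by nlinarith [i.isLt, j.isLt])
  · intro i
    have h1 : PowerSeries.constantCoeff (R := A) ((L.prod * M) i i) = 1 := by
      have := congrFun (congrFun hmap i) i
      simpa [Matrix.map_apply, Matrix.one_apply] using this
    exact ⟨h1, PowerSeries.isUnit_iff_constantCoeff.mpr (h1 ▸ isUnit_one)⟩
end

section
/- Let A be an associative ring with 1. Let M be an invertible n×n matrix over the Novikov ring A((z)) with inverse M⁻¹, and let k, ℓ be natural numbers such that every entry of z^k·M and every entry of z^ℓ·M⁻¹ lies in the subring A[[z]]. Let P be the quotient of A[[z]]^n (as a right A-module) by the right A[[z]]-submodule { (z^k·M)·v : v ∈ A[[z]]^n }, and let Q be the quotient of A[[z]]^n by { (z^ℓ·M⁻¹)·v : v ∈ A[[z]]^n }. Then P ⊕ Q is isomorphic as a right A-module to the free right A-module A^{n(k+ℓ)}; in particular P is a finitely generated projective right A-module. -/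
set_option maxHeartbeats 1000000

namespace NovikovAux

open MulOpposite HahnSeries

variable {A : Type*} [Ring A] {n : ℕ}

theorem ps_op_smul (a : Aᵐᵒᵖ) (f : PowerSeries A) :
    a • f = f * PowerSeries.C a.unop := by
  ext m
  rw [PowerSeries.coeff_mul_C, PowerSeries.coeff_smul]
  rfl

theorem ps_mul_op_smul (a : Aᵐᵒᵖ) (f g : PowerSeries A) :
    f * (a • g) = a • (f * g) := by
  rw [ps_op_smul, ps_op_smul, mul_assoc]

theorem hs_op_smul (a : Aᵐᵒᵖ) (x : HahnSeries ℤ A) :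
    a • x = x * HahnSeries.single 0 a.unop := by
  ext g
  rw [HahnSeries.coeff_mul_single_zero, HahnSeries.coeff_smul]
  rfl

theorem hs_mul_op_smul (a : Aᵐᵒᵖ) (f g : HahnSeries ℤ A) :
    f * (a • g) = a • (f * g) := by
  rw [hs_op_smul, hs_op_smul, mul_assoc]

theorem single_one_comm (d : ℤ) (x : HahnSeries ℤ A) :
    HahnSeries.single d (1 : A) * x = x * HahnSeries.single d 1 := by
  ext g
  obtain ⟨a, rfl⟩ : ∃ a, g = a + d := ⟨g - d, by ring⟩
  rw [HahnSeries.coeff_single_mul_add, HahnSeries.coeff_mul_single_add, one_mul, mul_one]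

theorem single_one_pow (d : ℤ) (k : ℕ) :
    (HahnSeries.single d (1 : A)) ^ k = HahnSeries.single ((k : ℤ) * d) 1 := by
  induction k with
  | zero => simp [HahnSeries.single_zero_one]
  | succ k ih =>
      rw [pow_succ, ih, HahnSeries.single_mul_single, one_mul]
      congr 1
      push_cast
      ring

/-- Multiplication by a matrix over power series, as a right `A`-linear map. -/
noncomputable def psMulVec (N : Matrix (Fin n) (Fin n) (PowerSeries A)) :
    (Fin n → PowerSeries A) →ₗ[Aᵐᵒᵖ] (Fin n → PowerSeries A) where
  toFun v := N.mulVec v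
  map_add' x y := Matrix.mulVec_add N x y
  map_smul' a v := by
    funext i
    show ∑ j, N i j * (a • v) j = a • ∑ j, N i j * v j
    rw [Finset.smul_sum]
    exact Finset.sum_congr rfl fun j _ => ps_mul_op_smul a (N i j) (v j)

theorem psMulVec_apply (N : Matrix (Fin n) (Fin n) (PowerSeries A)) (v) :
    psMulVec N v = N.mulVec v := rfl

/-- Multiplication by a matrix over Hahn series, as a right `A`-linear map. -/
noncomputable def hsMulVec (M : Matrix (Fin n) (Fin n) (HahnSeries ℤ A)) :
    (Fin n → HahnSeries ℤ A) →ₗ[Aᵐᵒᵖ] (Fin n → HahnSeries ℤ A) where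
  toFun v := M.mulVec v
  map_add' x y := Matrix.mulVec_add M x y
  map_smul' a v := by
    funext i
    show ∑ j, M i j * (a • v) j = a • ∑ j, M i j * v j
    rw [Finset.smul_sum]
    exact Finset.sum_congr rfl fun j _ => hs_mul_op_smul a (M i j) (v j)

/-- Componentwise left multiplication by a Hahn series. -/
noncomputable def hsScal (c : HahnSeries ℤ A) :
    (Fin n → HahnSeries ℤ A) →ₗ[Aᵐᵒᵖ] (Fin n → HahnSeries ℤ A) where
  toFun x := fun i => c * x i
  map_add' x y := by funext i; exact mul_add c (x i) (y i)
  map_smul' a x := by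
    funext i
    exact hs_mul_op_smul a c (x i)

/-- Componentwise inclusion of power series into Hahn series. -/
noncomputable def iotaV : (Fin n → PowerSeries A) →ₗ[Aᵐᵒᵖ] (Fin n → HahnSeries ℤ A) where
  toFun v := fun i => HahnSeries.ofPowerSeries ℤ A (v i)
  map_add' x y := by funext i; exact map_add _ (x i) (y i)
  map_smul' a v := by
    funext i
    show HahnSeries.ofPowerSeries ℤ A (a • v i) =
      a • HahnSeries.ofPowerSeries ℤ A (v i)
    rw [ps_op_smul, hs_op_smul, map_mul, HahnSeries.ofPowerSeries_C, HahnSeries.C_apply]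

theorem iotaV_injective : Function.Injective (iotaV (A := A) (n := n)) :=
  fun _ _ h => funext fun i => HahnSeries.ofPowerSeries_injective (congrFun h i)

/-- Componentwise truncation of Hahn series to power series. -/
noncomputable def truncV :
    (Fin n → HahnSeries ℤ A) →ₗ[Aᵐᵒᵖ] (Fin n → PowerSeries A) where
  toFun x := fun i => PowerSeries.mk fun j => (x i).coeff (j : ℤ)
  map_add' x y := by
    funext i
    ext j
    simp [PowerSeries.coeff_mk, HahnSeries.coeff_add]
  map_smul' a x := by
    funext i
    ext j
    show PowerSeries.coeff j (PowerSeries.mk fun j => ((a • x) i).coeff (j : ℤ)) =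
      PowerSeries.coeff j ((a • fun i => PowerSeries.mk fun j => (x i).coeff (j : ℤ)) i)
    rw [PowerSeries.coeff_mk]
    show (a • x i).coeff (j : ℤ) =
      PowerSeries.coeff j (a • PowerSeries.mk fun j => (x i).coeff (j : ℤ))
    rw [HahnSeries.coeff_smul, PowerSeries.coeff_smul, PowerSeries.coeff_mk]

theorem truncV_iotaV (v : Fin n → PowerSeries A) : truncV (iotaV v) = v := by
  funext i
  ext j
  show PowerSeries.coeff j
      (PowerSeries.mk fun j => (HahnSeries.ofPowerSeries ℤ A (v i)).coeff (j : ℤ)) = _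
  rw [PowerSeries.coeff_mk, HahnSeries.ofPowerSeries_apply_coeff]

theorem iotaV_psMulVec (M : Matrix (Fin n) (Fin n) (HahnSeries ℤ A))
    (N : Matrix (Fin n) (Fin n) (PowerSeries A)) (k : ℕ)
    (hN : ((HahnSeries.single (1 : ℤ) (1 : A)) ^ k) • M =
      N.map (HahnSeries.ofPowerSeries ℤ A)) (v : Fin n → PowerSeries A) :
    iotaV (psMulVec N v) =
      hsScal ((HahnSeries.single (1 : ℤ) (1 : A)) ^ k) (hsMulVec M (iotaV v)) := by
  funext i
  show HahnSeries.ofPowerSeries ℤ A (∑ j, N i j * v j) =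
    (HahnSeries.single (1 : ℤ) (1 : A)) ^ k *
      ∑ j, M i j * HahnSeries.ofPowerSeries ℤ A (v j)
  rw [map_sum, Finset.mul_sum]
  refine Finset.sum_congr rfl fun j _ => ?_
  have h1 : HahnSeries.ofPowerSeries ℤ A (N i j) =
      (HahnSeries.single (1 : ℤ) (1 : A)) ^ k * M i j := by
    have h2 := congrArg (fun P => P i j) hN
    simp only [Matrix.map_apply, Matrix.smul_apply, smul_eq_mul] at h2
    exact h2.symm
  rw [map_mul, h1, mul_assoc]

theorem hsMulVec_hsScal (M : Matrix (Fin n) (Fin n) (HahnSeries ℤ A)) (d : ℤ)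
    (x : Fin n → HahnSeries ℤ A) :
    hsMulVec M (hsScal (HahnSeries.single d (1 : A)) x) =
      hsScal (HahnSeries.single d (1 : A)) (hsMulVec M x) := by
  funext i
  show ∑ j, M i j * (HahnSeries.single d (1 : A) * x j) =
    HahnSeries.single d (1 : A) * ∑ j, M i j * x j
  rw [Finset.mul_sum]
  refine Finset.sum_congr rfl fun j _ => ?_
  rw [← mul_assoc, ← single_one_comm, mul_assoc]

theorem hsMulVec_hsMulVec (M M' : Matrix (Fin n) (Fin n) (HahnSeries ℤ A))
    (h : M' * M = 1) (x : Fin n → HahnSeries ℤ A) :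
    hsMulVec M' (hsMulVec M x) = x := by
  show M'.mulVec (M.mulVec x) = x
  rw [Matrix.mulVec_mulVec, h, Matrix.one_mulVec]

theorem hsScal_hsScal (c c' : HahnSeries ℤ A) (x : Fin n → HahnSeries ℤ A) :
    hsScal c (hsScal c' x) = hsScal (c * c') x := by
  funext i
  exact (mul_assoc c c' (x i)).symm

/-- The retraction `τ`. -/
noncomputable def retr (M' : Matrix (Fin n) (Fin n) (HahnSeries ℤ A)) (k : ℕ) :
    (Fin n → PowerSeries A) →ₗ[Aᵐᵒᵖ] (Fin n → PowerSeries A) :=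
  truncV ∘ₗ hsScal ((HahnSeries.single (-1 : ℤ) (1 : A)) ^ k) ∘ₗ hsMulVec M' ∘ₗ iotaV

theorem retr_psMulVec (M M' : Matrix (Fin n) (Fin n) (HahnSeries ℤ A))
    (hM'M : M' * M = 1)
    (N : Matrix (Fin n) (Fin n) (PowerSeries A)) (k : ℕ)
    (hN : ((HahnSeries.single (1 : ℤ) (1 : A)) ^ k) • M =
      N.map (HahnSeries.ofPowerSeries ℤ A)) (v : Fin n → PowerSeries A) :
    retr M' k (psMulVec N v) = v := by
  show truncV (hsScal _ (hsMulVec M' (iotaV (psMulVec N v)))) = v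
  rw [iotaV_psMulVec M N k hN, single_one_pow, single_one_pow,
    hsMulVec_hsScal, hsScal_hsScal, HahnSeries.single_mul_single, one_mul]
  have h0 : ((k : ℤ) * -1) + (k : ℤ) * 1 = 0 := by ring
  rw [h0, HahnSeries.single_zero_one]
  have hone : hsScal (1 : HahnSeries ℤ A) (hsMulVec M' (hsMulVec M (iotaV v))) =
      hsMulVec M' (hsMulVec M (iotaV v)) := by
    funext i; exact one_mul _
  rw [hone, hsMulVec_hsMulVec M M' hM'M, truncV_iotaV]

theorem psMulVec_psMulVec (M M' : Matrix (Fin n) (Fin n) (HahnSeries ℤ A))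
    (hMM' : M * M' = 1)
    (N N' : Matrix (Fin n) (Fin n) (PowerSeries A)) (k ℓ : ℕ)
    (hN : ((HahnSeries.single (1 : ℤ) (1 : A)) ^ k) • M =
      N.map (HahnSeries.ofPowerSeries ℤ A))
    (hN' : ((HahnSeries.single (1 : ℤ) (1 : A)) ^ ℓ) • M' =
      N'.map (HahnSeries.ofPowerSeries ℤ A)) (v : Fin n → PowerSeries A) :
    psMulVec N (psMulVec N' v) = fun i => (PowerSeries.X) ^ (k + ℓ) * v i := by
  apply iotaV_injective
  rw [iotaV_psMulVec M N k hN, iotaV_psMulVec M' N' ℓ hN', single_one_pow, single_one_pow,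
    hsMulVec_hsScal, hsScal_hsScal, HahnSeries.single_mul_single, one_mul,
    hsMulVec_hsMulVec M' M hMM']
  funext i
  show HahnSeries.single ((k : ℤ) * 1 + (ℓ : ℤ) * 1) (1 : A) *
      HahnSeries.ofPowerSeries ℤ A (v i) =
    HahnSeries.ofPowerSeries ℤ A ((PowerSeries.X) ^ (k + ℓ) * v i)
  rw [map_mul, HahnSeries.ofPowerSeries_X_pow]
  congr 2
  push_cast
  ring

/-- The coefficient-extraction map. -/
noncomputable def coeffMap (n m : ℕ) :
    (Fin n → PowerSeries A) →ₗ[Aᵐᵒᵖ] (Fin n × Fin m → A) where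
  toFun f := fun p => PowerSeries.coeff p.2 (f p.1)
  map_add' x y := by funext p; exact map_add _ (x p.1) (y p.1)
  map_smul' a f := by
    funext p
    show PowerSeries.coeff p.2 ((a • f) p.1) = a • PowerSeries.coeff p.2 (f p.1)
    rw [show (a • f) p.1 = a • f p.1 from rfl, PowerSeries.coeff_smul]

theorem coeffMap_surjective (m : ℕ) :
    Function.Surjective (coeffMap (A := A) n m) := by
  intro a
  refine ⟨fun i => ∑ j : Fin m, PowerSeries.monomial j (a (i, j)), ?_⟩
  funext p
  show PowerSeries.coeff p.2
      (∑ j : Fin m, PowerSeries.monomial (j : ℕ) (a (p.1, j))) = a p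
  rw [map_sum]
  have h1 : ∀ j : Fin m,
      PowerSeries.coeff (p.2 : ℕ) (PowerSeries.monomial (j : ℕ) (a (p.1, j)))
      = if p.2 = j then a (p.1, j) else 0 := by
    intro j
    rw [PowerSeries.coeff_monomial]
    simp [Fin.val_inj]
  simp only [h1]
  simp

end NovikovAux

open NovikovAux MulOpposite in
theorem novikov_cokernel_fg_projective (A : Type*) [Ring A] (n k ℓ : ℕ)
    (M M' : Matrix (Fin n) (Fin n) (HahnSeries ℤ A))
    (hMM' : M * M' = 1) (hM'M : M' * M = 1)
    (N N' : Matrix (Fin n) (Fin n) (PowerSeries A))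
    (hN : ((HahnSeries.single (1 : ℤ) (1 : A)) ^ k) • M =
      N.map (HahnSeries.ofPowerSeries ℤ A))
    (hN' : ((HahnSeries.single (1 : ℤ) (1 : A)) ^ ℓ) • M' =
      N'.map (HahnSeries.ofPowerSeries ℤ A)) :
    Nonempty
      ((((Fin n → PowerSeries A) ⧸
          Submodule.span Aᵐᵒᵖ {w : Fin n → PowerSeries A | ∃ v, w = N.mulVec v}) ×
        ((Fin n → PowerSeries A) ⧸
          Submodule.span Aᵐᵒᵖ {w : Fin n → PowerSeries A | ∃ v, w = N'.mulVec v}))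
        ≃ₗ[Aᵐᵒᵖ] (Fin (n * (k + ℓ)) → A)) ∧
    Module.Finite Aᵐᵒᵖ
      ((Fin n → PowerSeries A) ⧸
        Submodule.span Aᵐᵒᵖ {w : Fin n → PowerSeries A | ∃ v, w = N.mulVec v}) ∧
    Module.Projective Aᵐᵒᵖ
      ((Fin n → PowerSeries A) ⧸
        Submodule.span Aᵐᵒᵖ {w : Fin n → PowerSeries A | ∃ v, w = N.mulVec v}) := by
  classical
  set m := k + ℓ with hm
  set φ := psMulVec (A := A) N with hφ
  set φ' := psMulVec (A := A) N' with hφ'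
  set τ := retr (A := A) M' k with hτdef
  set τ' := retr (A := A) M ℓ with hτ'def
  have hτ : ∀ v, τ (φ v) = v := fun v => retr_psMulVec M M' hM'M N k hN v
  have hτ' : ∀ v, τ' (φ' v) = v := fun v => retr_psMulVec M' M hMM' N' ℓ hN' v
  have hμ : ∀ v, φ (φ' v) = fun i => (PowerSeries.X) ^ m * v i := fun v =>
    psMulVec_psMulVec M M' hMM' N N' k ℓ hN hN' v
  -- identify the spans with ranges
  have hspan : Submodule.span Aᵐᵒᵖ {w : Fin n → PowerSeries A | ∃ v, w = N.mulVec v}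
      = LinearMap.range φ := by
    have hset : {w : Fin n → PowerSeries A | ∃ v, w = N.mulVec v}
        = (LinearMap.range φ : Set (Fin n → PowerSeries A)) := by
      ext w
      simp only [Set.mem_setOf_eq, SetLike.mem_coe, LinearMap.mem_range]
      exact ⟨fun ⟨v, hv⟩ => ⟨v, hv.symm⟩, fun ⟨v, hv⟩ => ⟨v, hv.symm⟩⟩
    rw [hset, Submodule.span_eq]
  have hspan' : Submodule.span Aᵐᵒᵖ {w : Fin n → PowerSeries A | ∃ v, w = N'.mulVec v}
      = LinearMap.range φ' := by
    have hset : {w : Fin n → PowerSeries A | ∃ v, w = N'.mulVec v}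
        = (LinearMap.range φ' : Set (Fin n → PowerSeries A)) := by
      ext w
      simp only [Set.mem_setOf_eq, SetLike.mem_coe, LinearMap.mem_range]
      exact ⟨fun ⟨v, hv⟩ => ⟨v, hv.symm⟩, fun ⟨v, hv⟩ => ⟨v, hv.symm⟩⟩
    rw [hset, Submodule.span_eq]
  -- complements
  have hcompl : IsCompl (LinearMap.range φ) (LinearMap.ker τ) := by
    constructor
    · rw [disjoint_iff_inf_le]
      rintro x ⟨⟨v, rfl⟩, (hx2 : τ (φ v) = 0)⟩
      rw [hτ v] at hx2
      simp [hx2]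
    · rw [codisjoint_iff, eq_top_iff]
      intro x _
      refine Submodule.mem_sup.mpr ⟨φ (τ x), ⟨τ x, rfl⟩, x - φ (τ x), ?_, by abel⟩
      simp only [LinearMap.mem_ker, map_sub, hτ (τ x), sub_self]
  have hcompl' : IsCompl (LinearMap.range φ') (LinearMap.ker τ') := by
    constructor
    · rw [disjoint_iff_inf_le]
      rintro x ⟨⟨v, rfl⟩, (hx2 : τ' (φ' v) = 0)⟩
      rw [hτ' v] at hx2
      simp [hx2]
    · rw [codisjoint_iff, eq_top_iff]
      intro x _
      refine Submodule.mem_sup.mpr ⟨φ' (τ' x), ⟨τ' x, rfl⟩, x - φ' (τ' x), ?_, by abel⟩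
      simp only [LinearMap.mem_ker, map_sub, hτ' (τ' x), sub_self]
  have eP : ((Fin n → PowerSeries A) ⧸
      Submodule.span Aᵐᵒᵖ {w : Fin n → PowerSeries A | ∃ v, w = N.mulVec v})
      ≃ₗ[Aᵐᵒᵖ] LinearMap.ker τ :=
    (Submodule.quotEquivOfEq _ _ hspan).trans
      (Submodule.quotientEquivOfIsCompl _ _ hcompl)
  have eQ : ((Fin n → PowerSeries A) ⧸
      Submodule.span Aᵐᵒᵖ {w : Fin n → PowerSeries A | ∃ v, w = N'.mulVec v})
      ≃ₗ[Aᵐᵒᵖ] LinearMap.ker τ' :=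
    (Submodule.quotEquivOfEq _ _ hspan').trans
      (Submodule.quotientEquivOfIsCompl _ _ hcompl')
  -- the submodule K
  set K := LinearMap.range (φ ∘ₗ φ') with hKdef
  have hK : K = LinearMap.ker (coeffMap (A := A) n m) := by
    ext f
    constructor
    · rintro ⟨t, rfl⟩
      have h1 : φ (φ' t) = fun i => (PowerSeries.X) ^ m * t i := hμ t
      simp only [LinearMap.mem_ker, LinearMap.comp_apply, h1]
      funext p
      show PowerSeries.coeff (p.2 : ℕ) ((PowerSeries.X) ^ m * t p.1) = 0
      exact PowerSeries.X_pow_dvd_iff.mp (Dvd.intro _ rfl) p.2 p.2.isLt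
    · intro hf
      have hf' : ∀ i : Fin n, (PowerSeries.X : PowerSeries A) ^ m ∣ f i := by
        intro i
        rw [PowerSeries.X_pow_dvd_iff]
        intro j hj
        have := congrFun (LinearMap.mem_ker.mp hf) (i, (⟨j, hj⟩ : Fin m))
        exact this
      choose t ht using hf'
      refine ⟨t, ?_⟩
      rw [LinearMap.comp_apply, hμ t]
      funext i
      exact (ht i).symm
  have eK : ((Fin n → PowerSeries A) ⧸ K) ≃ₗ[Aᵐᵒᵖ] (Fin n × Fin m → A) :=
    (Submodule.quotEquivOfEq _ _ hK).trans
      ((coeffMap (A := A) n m).quotKerEquivOfSurjective (coeffMap_surjective m))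
  -- the map Ψ
  set Ψ : (LinearMap.ker τ × LinearMap.ker τ') →ₗ[Aᵐᵒᵖ]
      ((Fin n → PowerSeries A) ⧸ K) :=
    K.mkQ ∘ₗ (((LinearMap.ker τ).subtype).coprod
      (φ ∘ₗ (LinearMap.ker τ').subtype)) with hΨ
  have hΨapp : ∀ (x : LinearMap.ker τ) (y : LinearMap.ker τ'),
      Ψ (x, y) = K.mkQ ((x : Fin n → PowerSeries A) + φ (y : Fin n → PowerSeries A)) :=
    fun x y => rfl
  have hΨinj : Function.Injective Ψ := by
    rw [← LinearMap.ker_eq_bot, LinearMap.ker_eq_bot']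
    rintro ⟨⟨x, hx⟩, ⟨y, hy⟩⟩ h0
    rw [hΨapp] at h0
    simp only [Submodule.mkQ_apply, Submodule.Quotient.mk_eq_zero] at h0
    obtain ⟨t, ht⟩ := h0
    rw [LinearMap.comp_apply] at ht
    have hy0 : φ' t = y := by
      have h2 := congrArg τ ht
      rw [hτ (φ' t), map_add, hτ y] at h2
      rw [h2]
      simp only [LinearMap.mem_ker] at hx
      rw [hx, zero_add]
    have ht0 : t = 0 := by
      have h3 := congrArg τ' hy0
      rw [hτ' t] at h3
      simp only [LinearMap.mem_ker] at hy
      rw [h3, hy]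
    have hy0' : y = 0 := by rw [← hy0, ht0, map_zero]
    have hx0 : x = 0 := by
      rw [ht0, map_zero, map_zero, hy0', map_zero, add_zero] at ht
      exact ht.symm
    ext
    · simp [hx0]
    · simp [hy0']
  have hΨsurj : Function.Surjective Ψ := by
    intro q
    obtain ⟨f, rfl⟩ := Submodule.mkQ_surjective K q
    set t0 := τ' (τ f) with ht0def
    refine ⟨(⟨f - φ (τ f), ?_⟩, ⟨τ f - φ' t0, ?_⟩), ?_⟩
    · simp only [LinearMap.mem_ker, map_sub, hτ (τ f), sub_self]
    · simp only [LinearMap.mem_ker, map_sub, hτ' t0, ht0def, hτ' (τ' (τ f)), sub_self]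
    · rw [hΨapp]
      simp only [Submodule.mkQ_apply]
      rw [Submodule.Quotient.eq]
      have hexp : f - φ (τ f) + φ (τ f - φ' t0) - f = -(φ (φ' t0)) := by
        rw [map_sub]
        abel
      rw [hexp]
      exact neg_mem ⟨t0, rfl⟩
  have eΨ : (LinearMap.ker τ × LinearMap.ker τ') ≃ₗ[Aᵐᵒᵖ]
      ((Fin n → PowerSeries A) ⧸ K) := LinearEquiv.ofBijective Ψ ⟨hΨinj, hΨsurj⟩
  have eFin : (Fin n × Fin m → A) ≃ₗ[Aᵐᵒᵖ] (Fin (n * m) → A) :=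
    LinearEquiv.funCongrLeft Aᵐᵒᵖ A finProdFinEquiv.symm
  set eTotal := (((eP.prodCongr eQ).trans eΨ).trans eK).trans eFin with heTotal
  refine ⟨⟨eTotal⟩, ?_, ?_⟩
  · -- finiteness
    have finA : Module.Finite Aᵐᵒᵖ A := by
      refine ⟨⟨{1}, ?_⟩⟩
      rw [eq_top_iff]
      intro x _
      simp only [Finset.coe_singleton]
      exact Submodule.mem_span_singleton.mpr ⟨op x, by simp [op_smul_eq_mul]⟩
    have finPi : Module.Finite Aᵐᵒᵖ (Fin (n * m) → A) := Module.Finite.pi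
    haveI finProd := Module.Finite.equiv eTotal.symm
    exact Module.Finite.of_surjective
      (LinearMap.fst Aᵐᵒᵖ
        ((Fin n → PowerSeries A) ⧸
          Submodule.span Aᵐᵒᵖ {w : Fin n → PowerSeries A | ∃ v, w = N.mulVec v})
        ((Fin n → PowerSeries A) ⧸
          Submodule.span Aᵐᵒᵖ {w : Fin n → PowerSeries A | ∃ v, w = N'.mulVec v}))
      Prod.fst_surjective
  · -- projectivity
    have eA : A ≃ₗ[Aᵐᵒᵖ] Aᵐᵒᵖ :=
      { toFun := op
        invFun := unop
        map_add' := fun x y => rfl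
        map_smul' := fun r x => rfl
        left_inv := fun x => rfl
        right_inv := fun x => rfl }
    have freeA : Module.Free Aᵐᵒᵖ A := Module.Free.of_equiv eA.symm
    have freePi : Module.Free Aᵐᵒᵖ (Fin (n * m) → A) := Module.Free.pi _ _
    have projPi : Module.Projective Aᵐᵒᵖ (Fin (n * m) → A) :=
      Module.Projective.of_free
    exact Module.Projective.of_split
      (eTotal.toLinearMap ∘ₗ LinearMap.inl Aᵐᵒᵖ _ _)
      (LinearMap.fst Aᵐᵒᵖ _ _ ∘ₗ eTotal.symm.toLinearMap)
      (by ext x; simp)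
end

section
/- Let A be an associative ring with 1. Let M be an invertible n×n matrix over the Novikov ring A((z)) with inverse M⁻¹, and let k, ℓ be natural numbers such that every entry of z^k·M and every entry of z^ℓ·M⁻¹ lies in the subring A[[z]]. Let P be the quotient of A[[z]]^n (as a right A-module) by the right A[[z]]-submodule { (z^k·M)·v : v ∈ A[[z]]^n }. Then multiplication by z on A[[z]]^n preserves this submodule and hence descends to a well-defined right A-linear endomorphism ν of P, and ν is nilpotent; more precisely ν^{k+ℓ} = 0. -/
theorem novikov_cokernel_z_action_nilpotent (A : Type*) [Ring A] (n k ℓ : ℕ)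
    (M M' : Matrix (Fin n) (Fin n) (HahnSeries ℤ A))
    (hMM' : M * M' = 1) (hM'M : M' * M = 1)
    (N N' : Matrix (Fin n) (Fin n) (PowerSeries A))
    (hN : ((HahnSeries.single (1 : ℤ) (1 : A)) ^ k) • M =
      N.map (HahnSeries.ofPowerSeries ℤ A))
    (hN' : ((HahnSeries.single (1 : ℤ) (1 : A)) ^ ℓ) • M' =
      N'.map (HahnSeries.ofPowerSeries ℤ A)) :
    (∀ w ∈ Submodule.span Aᵐᵒᵖ {w : Fin n → PowerSeries A | ∃ v, w = N.mulVec v},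
      (PowerSeries.X : PowerSeries A) • w ∈
        Submodule.span Aᵐᵒᵖ {w : Fin n → PowerSeries A | ∃ v, w = N.mulVec v}) ∧
    ∃ ν : ((Fin n → PowerSeries A) ⧸
            Submodule.span Aᵐᵒᵖ {w : Fin n → PowerSeries A | ∃ v, w = N.mulVec v}) →ₗ[Aᵐᵒᵖ]
          ((Fin n → PowerSeries A) ⧸
            Submodule.span Aᵐᵒᵖ {w : Fin n → PowerSeries A | ∃ v, w = N.mulVec v}),
      (∀ v : Fin n → PowerSeries A,
        ν (Submodule.Quotient.mk v) =
          Submodule.Quotient.mk ((PowerSeries.X : PowerSeries A) • v)) ∧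
      ν ^ (k + ℓ) = 0 := by
  set z : HahnSeries ℤ A := HahnSeries.single (1:ℤ) (1:A) with hzdef
  set φ := HahnSeries.ofPowerSeries ℤ A with hφdef
  set S := Submodule.span Aᵐᵒᵖ {w : Fin n → PowerSeries A | ∃ v, w = N.mulVec v} with hSdef
  -- z is central
  have hzc : ∀ x : HahnSeries ℤ A, z * x = x * z := by
    intro x
    ext c
    have h1 := HahnSeries.coeff_single_mul_add (R := A) (r := (1:A)) (x := x) (a := c-1) (b := (1:ℤ))
    have h2 := HahnSeries.coeff_mul_single_add (R := A) (r := (1:A)) (x := x) (a := c-1) (b := (1:ℤ))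
    simp only [sub_add_cancel] at h1 h2
    rw [hzdef, h1, h2, one_mul, mul_one]
  have hzpc : ∀ (m : ℕ) (x : HahnSeries ℤ A), z ^ m * x = x * z ^ m := by
    intro m x
    have : Commute z x := hzc x
    exact (this.pow_left m).eq
  -- entries of N, N'
  have hφN : ∀ i j, φ (N i j) = z ^ k * M i j := by
    intro i j
    have := congrArg (fun P => P i j) hN
    simpa [Matrix.map_apply, Matrix.smul_apply, smul_eq_mul] using this.symm
  have hφN' : ∀ i j, φ (N' i j) = z ^ ℓ * M' i j := by
    intro i j
    have := congrArg (fun P => P i j) hN'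
    simpa [Matrix.map_apply, Matrix.smul_apply, smul_eq_mul] using this.symm
  -- key identity
  have key : N * N' = (PowerSeries.X : PowerSeries A) ^ (k + ℓ) •
      (1 : Matrix (Fin n) (Fin n) (PowerSeries A)) := by
    apply Matrix.ext
    intro i j
    apply HahnSeries.ofPowerSeries_injective (Γ := ℤ) (R := A)
    show φ _ = φ _
    rw [Matrix.mul_apply, map_sum]
    have hterm : ∀ l, φ (N i l * N' l j) = z ^ (k + ℓ) * (M i l * M' l j) := by
      intro l
      rw [map_mul, hφN, hφN', mul_assoc (z^k), ← mul_assoc (M i l), ← hzpc ℓ (M i l),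
        mul_assoc (z^ℓ), ← mul_assoc (z^k), ← pow_add]
    rw [Finset.sum_congr rfl fun l _ => hterm l, ← Finset.mul_sum]
    have hMM : ∑ l, M i l * M' l j = (1 : Matrix (Fin n) (Fin n) (HahnSeries ℤ A)) i j := by
      have := congrArg (fun P => P i j) hMM'
      simpa [Matrix.mul_apply] using this
    rw [hMM]
    simp [Matrix.smul_apply, smul_eq_mul, map_mul, map_pow,
      Matrix.one_apply, apply_ite φ, hφdef, HahnSeries.ofPowerSeries_X, hzdef]
    split_ifs <;> simp [HahnSeries.ofPowerSeries_X_pow]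
  -- right-A-linearity of mult by X
  have hopsmul : ∀ (a : Aᵐᵒᵖ) (f : PowerSeries A), a • f = f * PowerSeries.C (R := A) a.unop := by
    intro a f
    ext m
    simp [PowerSeries.coeff_mul_C]
  have hsm : ∀ (a : Aᵐᵒᵖ) (f : PowerSeries A),
      PowerSeries.X * (a • f) = a • (PowerSeries.X * f) := by
    intro a f
    rw [hopsmul, hopsmul, mul_assoc]
  set L : (Fin n → PowerSeries A) →ₗ[Aᵐᵒᵖ] (Fin n → PowerSeries A) :=
    { toFun := fun w => (PowerSeries.X : PowerSeries A) • w
      map_add' := fun w u => smul_add _ w u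
      map_smul' := by
        intro a w
        funext i
        show PowerSeries.X * (a • w i) = a • (PowerSeries.X * w i)
        exact hsm a (w i) } with hLdef
  have hflow : ∀ v : Fin n → PowerSeries A,
      (PowerSeries.X : PowerSeries A) • N.mulVec v = N.mulVec ((PowerSeries.X : PowerSeries A) • v) := by
    intro v
    funext i
    simp only [Pi.smul_apply, smul_eq_mul, Matrix.mulVec, dotProduct, Finset.mul_sum]
    refine Finset.sum_congr rfl fun j _ => ?_
    rw [← mul_assoc, ← (PowerSeries.commute_X (N i j)).eq, mul_assoc]
  have hScomap : S ≤ S.comap L := by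
    rw [hSdef, Submodule.span_le]
    rintro w ⟨v, rfl⟩
    simp only [SetLike.mem_coe, Submodule.mem_comap]
    show (PowerSeries.X : PowerSeries A) • N.mulVec v ∈ S
    rw [hflow]
    exact Submodule.subset_span ⟨_, rfl⟩
  refine ⟨fun w hw => ?_, ?_⟩
  · have := hScomap hw
    exact this
  · set ν := Submodule.mapQ S S L hScomap with hνdef
    have hν : ∀ v : Fin n → PowerSeries A,
        ν (Submodule.Quotient.mk v) = Submodule.Quotient.mk ((PowerSeries.X : PowerSeries A) • v) :=
      fun v => rfl
    refine ⟨ν, hν, ?_⟩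
    have hpow : ∀ (m : ℕ) (v : Fin n → PowerSeries A),
        (ν ^ m) (Submodule.Quotient.mk v) =
          Submodule.Quotient.mk (((PowerSeries.X : PowerSeries A) ^ m) • v) := by
      intro m
      induction m with
      | zero => intro v; simp
      | succ m ih =>
        intro v
        rw [pow_succ', Module.End.mul_apply, ih, hν, smul_smul, ← pow_succ']
    refine LinearMap.ext fun x => ?_
    obtain ⟨v, rfl⟩ := Submodule.Quotient.mk_surjective S x
    simp only [LinearMap.zero_apply, hpow]
    rw [Submodule.Quotient.mk_eq_zero]
    have : ((PowerSeries.X : PowerSeries A) ^ (k + ℓ)) • v = N.mulVec (N'.mulVec v) := by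
      rw [Matrix.mulVec_mulVec, key, Matrix.smul_mulVec, Matrix.one_mulVec]
    rw [this]
    exact Submodule.subset_span ⟨_, rfl⟩
end

section
/- Let A be an associative ring with 1 and let N be a nilpotent n×n matrix over A, say N^r = 0. Define maps of right A-modules d : A[[z]]^n → A[[z]]^n by d(v) = z·v − N·v (viewing N entrywise as a matrix over A[[z]]), and π : A[[z]]^n → A^n by π(Σ_{j≥0} z^j x_j) = Σ_{j≥0} N^j·x_j (a finite sum since N is nilpotent), where x_j ∈ A^n is the vector of j-th coefficients. Then the sequence 0 → A[[z]]^n →(d) A[[z]]^n →(π) A^n → 0 is a split short exact sequence of right A-modules: d is injective, π is surjective, the image of d equals the kernel of π, and the maps σ : A^n → A[[z]]^n sending x to the constant series x, and τ : A[[z]]^n → A[[z]]^n sending Σ_{j≥0} z^j x_j to Σ_{j≥0} z^j (Σ_{m≥0} N^m·x_{j+m+1}), satisfy π∘σ = id, τ∘d = id, and d∘τ + σ∘π = id. -/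
open PowerSeries Finset

private lemma psres_coeff_congr {A : Type*} [Ring A] {n : ℕ}
    (f : Fin n → PowerSeries A) {a b : ℕ} (h : a = b) :
    (fun i => PowerSeries.coeff a (f i)) = fun i => PowerSeries.coeff b (f i) := by
  rw [h]

private lemma psres_coeff_mulVec {A : Type*} [Ring A] {n : ℕ}
    (M : Matrix (Fin n) (Fin n) A) (v : Fin n → PowerSeries A) (j : ℕ) (i : Fin n) :
    PowerSeries.coeff j (((M.map PowerSeries.C).mulVec v) i)
      = M.mulVec (fun k => PowerSeries.coeff j (v k)) i := by
  simp [Matrix.mulVec, dotProduct, map_sum, PowerSeries.coeff_C_mul]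

private lemma psres_mulVec_sum {A : Type*} [Ring A] {n : ℕ} {ι : Type*} (s : Finset ι)
    (M : Matrix (Fin n) (Fin n) A) (w : ι → Fin n → A) :
    M.mulVec (∑ t ∈ s, w t) = ∑ t ∈ s, M.mulVec (w t) := by
  funext i
  simp only [Matrix.mulVec, dotProduct, Finset.sum_apply, Finset.mul_sum]
  rw [Finset.sum_comm]

private lemma psres_coeff_d_succ {A : Type*} [Ring A] {n : ℕ}
    (N : Matrix (Fin n) (Fin n) A) (v : Fin n → PowerSeries A) (j : ℕ) :
    (fun k => PowerSeries.coeff (j+1)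
        (((PowerSeries.X : PowerSeries A) • v - (N.map PowerSeries.C).mulVec v) k))
      = (fun k => PowerSeries.coeff j (v k))
        - N.mulVec (fun k => PowerSeries.coeff (j+1) (v k)) := by
  funext k
  have hsm : ((PowerSeries.X : PowerSeries A) • v) k = PowerSeries.X * v k := rfl
  rw [Pi.sub_apply, map_sub, hsm, PowerSeries.coeff_succ_X_mul,
    psres_coeff_mulVec, Pi.sub_apply]

private lemma psres_coeff_d_zero {A : Type*} [Ring A] {n : ℕ}
    (N : Matrix (Fin n) (Fin n) A) (v : Fin n → PowerSeries A) :
    (fun k => PowerSeries.coeff 0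
        (((PowerSeries.X : PowerSeries A) • v - (N.map PowerSeries.C).mulVec v) k))
      = - N.mulVec (fun k => PowerSeries.coeff 0 (v k)) := by
  funext k
  have hsm : ((PowerSeries.X : PowerSeries A) • v) k = PowerSeries.X * v k := rfl
  rw [Pi.sub_apply, map_sub, hsm, PowerSeries.coeff_zero_X_mul,
    psres_coeff_mulVec, zero_sub, Pi.neg_apply]

private lemma psres_tau_d {A : Type*} [Ring A] {n : ℕ}
    (N : Matrix (Fin n) (Fin n) A) {r : ℕ} (hr : N ^ r = 0)
    (v : Fin n → PowerSeries A) (j : ℕ) :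
    (∑ m ∈ Finset.range r, (N ^ m).mulVec
        (fun k => PowerSeries.coeff (j+m+1)
          (((PowerSeries.X : PowerSeries A) • v - (N.map PowerSeries.C).mulVec v) k)))
      = fun k => PowerSeries.coeff j (v k) := by
  have htel := Finset.sum_range_sub'
    (fun m => (N ^ m).mulVec (fun k => PowerSeries.coeff (j+m) (v k))) r
  beta_reduce at htel
  have key : ∀ m ∈ Finset.range r,
      (N ^ m).mulVec (fun k => PowerSeries.coeff (j+m+1)
        (((PowerSeries.X : PowerSeries A) • v - (N.map PowerSeries.C).mulVec v) k))
      = (N ^ m).mulVec (fun k => PowerSeries.coeff (j+m) (v k))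
        - (N ^ (m+1)).mulVec (fun k => PowerSeries.coeff (j+(m+1)) (v k)) := by
    intro m _
    rw [psres_coeff_d_succ N v (j+m), Matrix.mulVec_sub, Matrix.mulVec_mulVec, ← pow_succ,
      congrArg ((N ^ (m+1)).mulVec) (psres_coeff_congr v (show j+m+1 = j+(m+1) by omega))]
  rw [Finset.sum_congr rfl key, htel, hr, Matrix.zero_mulVec, sub_zero, pow_zero,
    Matrix.one_mulVec, psres_coeff_congr v (show j+0 = j by omega)]

private lemma psres_pi_sigma {A : Type*} [Ring A] {n : ℕ}
    (N : Matrix (Fin n) (Fin n) A) {r : ℕ} (hr : N ^ r = 0) (x : Fin n → A) :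
    (∑ j ∈ Finset.range r, (N ^ j).mulVec
        (fun i => PowerSeries.coeff j (PowerSeries.C (x i)))) = x := by
  rcases Nat.eq_zero_or_pos r with h0 | hpos
  · subst h0
    have h1 : (1 : Matrix (Fin n) (Fin n) A) = 0 := by simpa using hr
    calc (∑ j ∈ Finset.range 0, (N ^ j).mulVec
        (fun i => PowerSeries.coeff j (PowerSeries.C (x i)))) = 0 := by simp
      _ = (0 : Matrix (Fin n) (Fin n) A).mulVec x := by rw [Matrix.zero_mulVec]
      _ = (1 : Matrix (Fin n) (Fin n) A).mulVec x := by rw [h1]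
      _ = x := Matrix.one_mulVec x
  · rw [Finset.sum_eq_single 0]
    · simp [Matrix.one_mulVec]
    · intro b _ hb
      have hz : (fun i => PowerSeries.coeff b (PowerSeries.C (x i)))
          = (0 : Fin n → A) := by
        funext i; simp [PowerSeries.coeff_C, hb]
      rw [hz, Matrix.mulVec_zero]
    · intro h; exact absurd (Finset.mem_range.mpr hpos) h

private lemma psres_split {A : Type*} [Ring A] {n : ℕ}
    (N : Matrix (Fin n) (Fin n) A) {r : ℕ} (hr : N ^ r = 0)
    (f : Fin n → PowerSeries A) :
    (((PowerSeries.X : PowerSeries A) • (fun i => PowerSeries.mk fun j' =>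
          (∑ m ∈ Finset.range r,
            (N ^ m).mulVec (fun i' => PowerSeries.coeff (j' + m + 1) (f i'))) i)
        - (N.map PowerSeries.C).mulVec (fun i => PowerSeries.mk fun j' =>
          (∑ m ∈ Finset.range r,
            (N ^ m).mulVec (fun i' => PowerSeries.coeff (j' + m + 1) (f i'))) i))
      + fun i => PowerSeries.C
          ((∑ j' ∈ Finset.range r,
            (N ^ j').mulVec (fun i' => PowerSeries.coeff j' (f i'))) i))
      = f := by
  set τf : Fin n → PowerSeries A := fun i => PowerSeries.mk fun j' =>
      (∑ m ∈ Finset.range r,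
        (N ^ m).mulVec (fun i' => PowerSeries.coeff (j' + m + 1) (f i'))) i with hτf
  have hcoeffτ : ∀ j', (fun k => PowerSeries.coeff j' (τf k))
      = ∑ m ∈ Finset.range r,
        (N ^ m).mulVec (fun i' => PowerSeries.coeff (j' + m + 1) (f i')) := by
    intro j'; funext k; rw [hτf]; simp [PowerSeries.coeff_mk]
  funext k
  apply PowerSeries.ext
  intro j
  have hgoal : ∀ V W : Fin n → PowerSeries A, ∀ (c : ℕ),
      PowerSeries.coeff c ((V + W) k)
        = PowerSeries.coeff c (V k) + PowerSeries.coeff c (W k) := by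
    intro V W c; simp
  cases j with
  | zero =>
    rw [hgoal]
    have h1 := congrFun (psres_coeff_d_zero N τf) k
    rw [h1]
    have h2 : PowerSeries.coeff 0 ((fun i => PowerSeries.C
        ((∑ j' ∈ Finset.range r,
          (N ^ j').mulVec (fun i' => PowerSeries.coeff j' (f i'))) i)) k)
        = (∑ j' ∈ Finset.range r,
          (N ^ j').mulVec (fun i' => PowerSeries.coeff j' (f i'))) k := by simp
    rw [h2]
    have V : - N.mulVec (fun k => PowerSeries.coeff 0 (τf k))
        + (∑ j' ∈ Finset.range r,
          (N ^ j').mulVec (fun i' => PowerSeries.coeff j' (f i')))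
        = fun k => PowerSeries.coeff 0 (f k) := by
      rw [hcoeffτ 0, psres_mulVec_sum]
      have hNsum : ∀ m ∈ Finset.range r,
          N.mulVec ((N ^ m).mulVec (fun i' => PowerSeries.coeff (0 + m + 1) (f i')))
          = (N ^ (m+1)).mulVec (fun i' => PowerSeries.coeff (m+1) (f i')) := by
        intro m _
        rw [Matrix.mulVec_mulVec, ← pow_succ',
          congrArg ((N ^ (m+1)).mulVec) (psres_coeff_congr f (show 0+m+1 = m+1 by omega))]
      rw [Finset.sum_congr rfl hNsum, neg_add_eq_sub]
      have htel := Finset.sum_range_sub'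
        (fun m => (N ^ m).mulVec (fun i' => PowerSeries.coeff m (f i'))) r
      beta_reduce at htel
      rw [Finset.sum_sub_distrib] at htel
      rw [htel, hr, Matrix.zero_mulVec, sub_zero, pow_zero, Matrix.one_mulVec]
    exact congrFun V k
  | succ j =>
    rw [hgoal]
    have h1 := congrFun (psres_coeff_d_succ N τf j) k
    rw [h1]
    have h2 : PowerSeries.coeff (j+1) ((fun i => PowerSeries.C
        ((∑ j' ∈ Finset.range r,
          (N ^ j').mulVec (fun i' => PowerSeries.coeff j' (f i'))) i)) k) = 0 := by
      simp [PowerSeries.coeff_C]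
    rw [h2, add_zero]
    have V : (fun k => PowerSeries.coeff j (τf k))
        - N.mulVec (fun k => PowerSeries.coeff (j+1) (τf k))
        = fun k => PowerSeries.coeff (j+1) (f k) := by
      rw [hcoeffτ j, hcoeffτ (j+1), psres_mulVec_sum]
      have hNsum : ∀ m ∈ Finset.range r,
          N.mulVec ((N ^ m).mulVec (fun i' => PowerSeries.coeff (j + 1 + m + 1) (f i')))
          = (N ^ (m+1)).mulVec (fun i' => PowerSeries.coeff (j + (m+1) + 1) (f i')) := by
        intro m _
        rw [Matrix.mulVec_mulVec, ← pow_succ',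
          congrArg ((N ^ (m+1)).mulVec)
            (psres_coeff_congr f (show j+1+m+1 = j+(m+1)+1 by omega))]
      rw [Finset.sum_congr rfl hNsum]
      have htel := Finset.sum_range_sub'
        (fun m => (N ^ m).mulVec (fun i' => PowerSeries.coeff (j + m + 1) (f i'))) r
      beta_reduce at htel
      rw [Finset.sum_sub_distrib] at htel
      rw [htel, hr, Matrix.zero_mulVec, sub_zero, pow_zero, Matrix.one_mulVec,
        psres_coeff_congr f (show j+0+1 = j+1 by omega)]
    exact congrFun V k

theorem power_series_resolution_of_nilpotent (A : Type*) [Ring A] (n r : ℕ)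
    (N : Matrix (Fin n) (Fin n) A) (hr : N ^ r = 0) :
    -- d(v) = z·v − N·v
    let d : (Fin n → PowerSeries A) → (Fin n → PowerSeries A) :=
      fun v => (PowerSeries.X : PowerSeries A) • v - (N.map PowerSeries.C).mulVec v
    -- π(Σ z^j x_j) = Σ N^j x_j  (a finite sum since N^r = 0)
    let π : (Fin n → PowerSeries A) → (Fin n → A) :=
      fun f => ∑ j ∈ Finset.range r, (N ^ j).mulVec (fun i => PowerSeries.coeff j (f i))
    -- σ(x) = the constant series x
    let σ : (Fin n → A) → (Fin n → PowerSeries A) :=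
      fun x i => PowerSeries.C (x i)
    -- τ(Σ z^j x_j) = Σ z^j (Σ_m N^m x_{j+m+1})
    let τ : (Fin n → PowerSeries A) → (Fin n → PowerSeries A) :=
      fun f i => PowerSeries.mk fun j =>
        (∑ m ∈ Finset.range r,
          (N ^ m).mulVec (fun i' => PowerSeries.coeff (j + m + 1) (f i'))) i
    Function.Injective d ∧
    Function.Surjective π ∧
    (∀ f : Fin n → PowerSeries A, π f = 0 ↔ ∃ v, d v = f) ∧
    (∀ x : Fin n → A, π (σ x) = x) ∧
    (∀ v : Fin n → PowerSeries A, τ (d v) = v) ∧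
    (∀ f : Fin n → PowerSeries A, d (τ f) + σ (π f) = f) := by
  intro d π σ τ
  have hτd : ∀ v : Fin n → PowerSeries A, τ (d v) = v := by
    intro v
    funext i
    apply PowerSeries.ext
    intro j
    show PowerSeries.coeff j (PowerSeries.mk (fun j' =>
        (∑ m ∈ Finset.range r, (N ^ m).mulVec (fun i' => PowerSeries.coeff (j' + m + 1)
          (((PowerSeries.X : PowerSeries A) • v - (N.map PowerSeries.C).mulVec v) i'))) i))
      = PowerSeries.coeff j (v i)
    rw [PowerSeries.coeff_mk]
    exact congrFun (psres_tau_d N hr v j) i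
  have hπσ : ∀ x : Fin n → A, π (σ x) = x := fun x => psres_pi_sigma N hr x
  have hsplit : ∀ f : Fin n → PowerSeries A, d (τ f) + σ (π f) = f :=
    fun f => psres_split N hr f
  have hσ0 : σ 0 = 0 := by
    funext i
    show PowerSeries.C ((0 : Fin n → A) i) = 0
    simp
  have hσinj : ∀ y : Fin n → A, σ y = 0 → y = 0 := by
    intro y hy
    funext i
    have h1 : PowerSeries.coeff 0 (σ y i) = y i := by
      show PowerSeries.coeff 0 (PowerSeries.C (y i)) = y i
      simp
    rw [hy] at h1
    simpa using h1.symm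
  refine ⟨?_, ?_, ?_, hπσ, hτd, hsplit⟩
  · intro a b hab
    rw [← hτd a, ← hτd b, hab]
  · intro x
    exact ⟨σ x, hπσ x⟩
  · intro f
    constructor
    · intro hf
      refine ⟨τ f, ?_⟩
      have := hsplit f
      rwa [hf, hσ0, add_zero] at this
    · rintro ⟨v, rfl⟩
      have hs := hsplit (d v)
      rw [hτd v] at hs
      have h0 : σ (π (d v)) = 0 := by
        have := add_eq_left.mp hs
        exact this
      exact hσinj _ h0
end

section
/- Let H and K be groups, let φ : K → Aut(H) be a group homomorphism, and let G = H ⋊_φ K be the semidirect product, with i : H → G the canonical inclusion. Let i^{ab} : H^{ab} → G^{ab} be the induced homomorphism of abelianizations. Then the kernel of i^{ab} equals the subgroup of H^{ab} generated by the elements [φ(k)(h)]·[h]⁻¹ for all k ∈ K and h ∈ H, where [x] denotes the class of x ∈ H in H^{ab}. (Equivalently, viewing H^{ab} as a ℤ[K]-module via φ, the kernel is (ker ε)·H^{ab} for the augmentation ε : ℤ[K] → ℤ.) -/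
theorem ker_abelianization_map_of_semidirect_inl (H K : Type*) [Group H] [Group K]
    (φ : K →* MulAut H) :
    (Abelianization.map (SemidirectProduct.inl : H →* H ⋊[φ] K)).ker =
      Subgroup.closure
        {x : Abelianization H |
          ∃ (k : K) (h : H), x = Abelianization.of (φ k h) * (Abelianization.of h)⁻¹} := by
  set N := Subgroup.closure {x : Abelianization H |
      ∃ (k : K) (h : H), x = Abelianization.of (φ k h) * (Abelianization.of h)⁻¹} with hN
  have key : ∀ (k : K) (h : H),
      (QuotientGroup.mk (Abelianization.of (φ k h)) : Abelianization H ⧸ N) =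
        QuotientGroup.mk (Abelianization.of h) := by
    intro k h
    rw [QuotientGroup.eq]
    have : Abelianization.of (φ k h) * (Abelianization.of h)⁻¹ ∈ N :=
      Subgroup.subset_closure ⟨k, h, rfl⟩
    have := N.inv_mem this
    simpa [mul_comm] using this
  let f : (H ⋊[φ] K) →* Abelianization H ⧸ N :=
  { toFun := fun g => QuotientGroup.mk (Abelianization.of g.left)
    map_one' := by simp
    map_mul' := by
      intro a b
      show (QuotientGroup.mk (Abelianization.of (a.left * φ a.right b.left))
          : Abelianization H ⧸ N) = _
      rw [map_mul, QuotientGroup.mk_mul, key] }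
  apply le_antisymm
  · intro x hx
    obtain ⟨h, rfl⟩ : ∃ h : H, Abelianization.of h = x := QuotientGroup.mk'_surjective (commutator H) x
    have hx' : Abelianization.of (SemidirectProduct.inl (φ := φ) h) = 1 := by
      simpa [Abelianization.map_of] using hx
    have := congrArg (Abelianization.lift f) hx'
    rw [Abelianization.lift_apply_of, map_one] at this
    have : (QuotientGroup.mk (Abelianization.of h) : Abelianization H ⧸ N) = 1 := this
    rwa [QuotientGroup.eq_one_iff] at this
  · rw [Subgroup.closure_le]
    rintro x ⟨k, h, rfl⟩
    show Abelianization.map _ _ = 1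
    rw [map_mul, map_inv, Abelianization.map_of, Abelianization.map_of,
      SemidirectProduct.inl_aut]
    simp [mul_comm, mul_assoc, mul_left_comm]
end

section
/- Let A be an associative ring with 1, let α be a unit of A and β an element of A with α·β ≠ β·α. In the unit group of A[[z]], let u = ι(α) be the constant unit α and let x = 1 + β·z (a Witt vector, hence a unit). Then the commutator w = u·x·u⁻¹·x⁻¹ satisfies: (1) w is a Witt vector, i.e. a unit of A[[z]] with constant coefficient 1; (2) the coefficient of z in w equals α·β·α⁻¹ − β, which is nonzero; (3) w lies in the commutator subgroup of (A[[z]])ˣ but does not lie in the commutator subgroup of the group W(A) of Witt vectors. Consequently the homomorphism W(A)^{ab} → ((A[[z]])ˣ)^{ab} induced by the inclusion W(A) ⊆ (A[[z]])ˣ is not injective. -/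
open PowerSeries

lemma coeff_one_mul' {A : Type*} [Ring A] (φ ψ : A⟦X⟧) :
    coeff 1 (φ * ψ) = constantCoeff φ * coeff 1 ψ + coeff 1 φ * constantCoeff ψ := by
  have h : Finset.HasAntidiagonal.antidiagonal (1 : ℕ) = {(0, 1), (1, 0)} := rfl
  rw [coeff_mul, h, Finset.sum_insert (by decide), Finset.sum_singleton]
  simp [coeff_zero_eq_constantCoeff]

lemma inv_coeffs {A : Type*} [Ring A] (β : A) (x : (PowerSeries A)ˣ)
    (hx : x.val = 1 + PowerSeries.C β * PowerSeries.X) :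
    constantCoeff x⁻¹.val = 1 ∧ coeff 1 x⁻¹.val = -β := by
  have hc0x : constantCoeff x.val = 1 := by rw [hx]; simp
  have h1 : x.val * x⁻¹.val = 1 := by rw [← Units.val_mul, mul_inv_cancel]; rfl
  have hc0 : constantCoeff x⁻¹.val = 1 := by
    have := congrArg (constantCoeff) h1
    rw [map_mul, hc0x, one_mul, map_one] at this
    exact this
  refine ⟨hc0, ?_⟩
  have h2 := congrArg (coeff 1) h1
  rw [coeff_one_mul', hc0x, hc0, mul_one, one_mul] at h2
  have hx1 : coeff 1 x.val = β := by rw [hx]; simp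
  rw [hx1, PowerSeries.coeff_one, if_neg one_ne_zero] at h2
  exact eq_neg_of_add_eq_zero_left h2

theorem witt_abelianization_not_injective (A : Type*) [Ring A]
    (α : Aˣ) (β : A) (hαβ : (α : A) * β ≠ β * (α : A)) :
    -- u = ι(α), the constant unit; W = group of Witt vectors = ker of units of constantCoeff
    let u : (PowerSeries A)ˣ := Units.map (PowerSeries.C : A →+* PowerSeries A).toMonoidHom α
    let W : Subgroup (PowerSeries A)ˣ :=
      (Units.map (PowerSeries.constantCoeff : PowerSeries A →+* A).toMonoidHom).ker
    -- x = 1 + β·z is a unit of A[[z]]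
    (∃ x : (PowerSeries A)ˣ,
      x.val = 1 + PowerSeries.C β * PowerSeries.X) ∧
    (∀ x : (PowerSeries A)ˣ, x.val = 1 + PowerSeries.C β * PowerSeries.X →
      -- (1) w = u·x·u⁻¹·x⁻¹ is a Witt vector
      PowerSeries.constantCoeff (u * x * u⁻¹ * x⁻¹).val = 1 ∧
      -- (2) the coefficient of z in w is α·β·α⁻¹ − β ≠ 0
      PowerSeries.coeff 1 (u * x * u⁻¹ * x⁻¹).val =
        (α : A) * β * ((α⁻¹ : Aˣ) : A) - β ∧
      PowerSeries.coeff 1 (u * x * u⁻¹ * x⁻¹).val ≠ 0 ∧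
      -- (3) w lies in [(A[[z]])ˣ, (A[[z]])ˣ] but not in [W(A), W(A)]
      u * x * u⁻¹ * x⁻¹ ∈ commutator (PowerSeries A)ˣ ∧
      (∀ hw : u * x * u⁻¹ * x⁻¹ ∈ W,
        (⟨u * x * u⁻¹ * x⁻¹, hw⟩ : W) ∉ commutator W)) ∧
    -- consequently W(A)^{ab} → ((A[[z]])ˣ)^{ab} is not injective
    ¬ Function.Injective ⇑(Abelianization.map W.subtype) := by
  intro u W
  -- coefficient-1 homomorphism on W
  have memW : ∀ g : (PowerSeries A)ˣ, g ∈ W → constantCoeff g.val = 1 := by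
    intro g hg
    have : Units.map (PowerSeries.constantCoeff : PowerSeries A →+* A).toMonoidHom g = 1 := hg
    exact congrArg Units.val this
  let f : W →* Multiplicative A :=
    { toFun := fun g => Multiplicative.ofAdd (coeff 1 g.val.val)
      map_one' := by simp [PowerSeries.coeff_one]
      map_mul' := by
        intro g h
        have : coeff 1 (g.val.val * h.val.val) = coeff 1 g.val.val + coeff 1 h.val.val := by
          rw [coeff_one_mul', memW g.val g.2, memW h.val h.2, mul_one, one_mul, add_comm]
        simp only [Units.val_mul, Subgroup.coe_mul] at *
        rw [this]
        rfl }
  have hfker : commutator W ≤ f.ker := Abelianization.commutator_subset_ker f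
  -- existence of x
  have hexists : ∃ x : (PowerSeries A)ˣ,
      x.val = 1 + PowerSeries.C β * PowerSeries.X := by
    have : IsUnit (1 + PowerSeries.C β * PowerSeries.X) := by
      rw [PowerSeries.isUnit_iff_constantCoeff]
      simp
    exact this
  have key : ∀ x : (PowerSeries A)ˣ, x.val = 1 + PowerSeries.C β * PowerSeries.X →
      PowerSeries.constantCoeff (u * x * u⁻¹ * x⁻¹).val = 1 ∧
      PowerSeries.coeff 1 (u * x * u⁻¹ * x⁻¹).val =
        (α : A) * β * ((α⁻¹ : Aˣ) : A) - β ∧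
      PowerSeries.coeff 1 (u * x * u⁻¹ * x⁻¹).val ≠ 0 ∧
      u * x * u⁻¹ * x⁻¹ ∈ commutator (PowerSeries A)ˣ ∧
      (∀ hw : u * x * u⁻¹ * x⁻¹ ∈ W,
        (⟨u * x * u⁻¹ * x⁻¹, hw⟩ : W) ∉ commutator W) := by
    intro x hx
    obtain ⟨hc0i, hc1i⟩ := inv_coeffs β x hx
    have huval : u.val = PowerSeries.C (α : A) := rfl
    have huinv : (u⁻¹).val = PowerSeries.C ((α⁻¹ : Aˣ) : A) := rfl
    have hc0x : constantCoeff x.val = 1 := by rw [hx]; simp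
    have hc1x : coeff 1 x.val = β := by rw [hx]; simp
    have hval : (u * x * u⁻¹ * x⁻¹).val = u.val * x.val * (u⁻¹).val * x⁻¹.val := by
      simp [Units.val_mul]
    -- constant coefficients
    have hc0 : constantCoeff (u * x * u⁻¹ * x⁻¹).val = 1 := by
      rw [hval, map_mul, map_mul, map_mul, huval, huinv, hc0x, hc0i,
        PowerSeries.constantCoeff_C, PowerSeries.constantCoeff_C, mul_one, mul_one,
        Units.mul_inv]
    -- coefficient 1
    have hc1 : coeff 1 (u * x * u⁻¹ * x⁻¹).val = (α : A) * β * ((α⁻¹ : Aˣ) : A) - β := by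
      have e1 : coeff 1 (u.val * x.val) = (α : A) * β := by
        rw [coeff_one_mul', huval, PowerSeries.constantCoeff_C, hc1x]
        simp [PowerSeries.coeff_C]
      have c1 : constantCoeff (u.val * x.val) = (α : A) := by
        rw [map_mul, huval, PowerSeries.constantCoeff_C, hc0x, mul_one]
      have e2 : coeff 1 (u.val * x.val * (u⁻¹).val) = (α : A) * β * ((α⁻¹ : Aˣ) : A) := by
        rw [coeff_one_mul', huinv, e1, c1, PowerSeries.constantCoeff_C]
        simp [PowerSeries.coeff_C]
      have c2 : constantCoeff (u.val * x.val * (u⁻¹).val) = 1 := by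
        rw [map_mul, c1, huinv, PowerSeries.constantCoeff_C, Units.mul_inv]
      rw [hval, coeff_one_mul', e2, c2, hc0i, hc1i, one_mul, mul_one]
      exact (sub_eq_neg_add _ _).symm
    have hne : coeff 1 (u * x * u⁻¹ * x⁻¹).val ≠ 0 := by
      rw [hc1]
      intro h0
      apply hαβ
      have : (α : A) * β * ((α⁻¹ : Aˣ) : A) = β := by
        have := sub_eq_zero.mp h0
        exact this
      calc (α : A) * β = (α : A) * β * ((α⁻¹ : Aˣ) : A) * (α : A) := by
            rw [Units.inv_mul_cancel_right]
        _ = β * (α : A) := by rw [this]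
    refine ⟨hc0, hc1, hne, ?_, ?_⟩
    · open scoped commutatorElement in have : u * x * u⁻¹ * x⁻¹ = ⁅u, x⁆ := (commutatorElement_def u x).symm
      rw [this, commutator_def]
      exact Subgroup.commutator_mem_commutator (Subgroup.mem_top u) (Subgroup.mem_top x)
    · intro hw hmem
      have : f ⟨u * x * u⁻¹ * x⁻¹, hw⟩ = 1 := hfker hmem
      have h0 : coeff 1 (u * x * u⁻¹ * x⁻¹).val = 0 := this
      exact hne h0
  refine ⟨hexists, key, ?_⟩
  -- non-injectivity
  obtain ⟨x, hx⟩ := hexists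
  obtain ⟨hc0, -, hne, hcomm, hnotin⟩ := key x hx
  have hw : u * x * u⁻¹ * x⁻¹ ∈ W := Units.ext hc0
  intro hinj
  have h2 : Abelianization.of (u * x * u⁻¹ * x⁻¹) = 1 :=
    Abelianization.commutator_subset_ker (Abelianization.of) hcomm
  have h3 : Abelianization.map W.subtype
      (Abelianization.of (⟨u * x * u⁻¹ * x⁻¹, hw⟩ : W)) =
      Abelianization.map W.subtype 1 := by
    rw [map_one, Abelianization.map_of]
    exact h2
  have h4 := hinj h3
  exact hnotin hw ((QuotientGroup.eq_one_iff _).mp h4)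
end

section
/- Let A be an associative ring with 1. Let M and M' be invertible n×n matrices over the Novikov ring A((z)), and let k, k' be natural numbers such that every entry of z^k·M and of z^{k'}·M' lies in A[[z]]. Set M'' = M'·M and k'' = k + k', so every entry of z^{k''}·M'' lies in A[[z]]. Let P, P', P'' be the quotients of the right A[[z]]-module A[[z]]^n by the submodules { (z^k·M)·v }, { (z^{k'}·M')·v }, { (z^{k''}·M'')·v } respectively (v ranging over A[[z]]^n). Then the map P → P'' induced by v ↦ (z^{k'}·M')·v and the map P'' → P' induced by the identity of A[[z]]^n are well-defined right A-module homomorphisms fitting into a short exact sequence 0 → P → P'' → P' → 0 of right A-modules which commutes with the endomorphisms induced by multiplication by z on P, P'' and P'. -/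
section Aux
variable {A : Type*} [Ring A]

open PowerSeries in
lemma NovikovAux.opSmul_mul (a : Aᵐᵒᵖ) (x y : PowerSeries A) :
    a • (x * y) = x * (a • y) := by
  ext m
  have h1 : ∀ (z : PowerSeries A) (m : ℕ), coeff m (a • z) = coeff m z * a.unop :=
    fun _ _ => rfl
  rw [h1, coeff_mul, coeff_mul, Finset.sum_mul]
  simp only [h1, mul_assoc]

instance NovikovAux.opSMulComm : SMulCommClass Aᵐᵒᵖ (PowerSeries A) (PowerSeries A) :=
  ⟨fun a x y => by simpa only [smul_eq_mul] using NovikovAux.opSmul_mul a x y⟩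

/-- `mulVec` as a right `A`-linear map. -/
noncomputable def NovikovAux.mulVecOp {n : ℕ} (N : Matrix (Fin n) (Fin n) (PowerSeries A)) :
    (Fin n → PowerSeries A) →ₗ[Aᵐᵒᵖ] (Fin n → PowerSeries A) where
  toFun v := N.mulVec v
  map_add' v w := Matrix.mulVec_add N v w
  map_smul' a v := Matrix.mulVec_smul N a v

lemma NovikovAux.span_eq_range {n : ℕ} (N : Matrix (Fin n) (Fin n) (PowerSeries A)) :
    Submodule.span Aᵐᵒᵖ {w : Fin n → PowerSeries A | ∃ v, w = N.mulVec v} =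
      LinearMap.range (NovikovAux.mulVecOp N) := by
  have : {w : Fin n → PowerSeries A | ∃ v, w = N.mulVec v} =
      (LinearMap.range (NovikovAux.mulVecOp N) : Set (Fin n → PowerSeries A)) := by
    ext w
    simp only [Set.mem_setOf_eq, SetLike.mem_coe, LinearMap.mem_range]
    exact ⟨fun ⟨v, hv⟩ => ⟨v, hv.symm⟩, fun ⟨v, hv⟩ => ⟨v, hv.symm⟩⟩
  rw [this, Submodule.span_eq]

lemma NovikovAux.mulVec_X_smul {n : ℕ} (N : Matrix (Fin n) (Fin n) (PowerSeries A))
    (v : Fin n → PowerSeries A) :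
    N.mulVec ((PowerSeries.X : PowerSeries A) • v) =
      (PowerSeries.X : PowerSeries A) • N.mulVec v := by
  funext i
  simp only [Matrix.mulVec, dotProduct, Pi.smul_apply, smul_eq_mul, Finset.mul_sum]
  exact Finset.sum_congr rfl fun j _ => by
    rw [← mul_assoc, (PowerSeries.commute_X (N i j)).eq, mul_assoc]

lemma NovikovAux.single_one_comm_s15 (g : ℤ) (x : HahnSeries ℤ A) :
    HahnSeries.single g (1 : A) * x = x * HahnSeries.single g (1 : A) := by
  ext c
  have h1 := HahnSeries.coeff_single_mul_add (r := (1:A)) (x := x) (a := c - g) (b := g)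
  have h2 := HahnSeries.coeff_mul_single_add (r := (1:A)) (x := x) (a := c - g) (b := g)
  rw [sub_add_cancel] at h1 h2
  rw [h1, h2, one_mul, mul_one]

lemma NovikovAux.single_isUnit (g : ℤ) : IsUnit (HahnSeries.single g (1 : A)) := by
  refine ⟨⟨HahnSeries.single g 1, HahnSeries.single (-g) 1, ?_, ?_⟩, rfl⟩ <;>
    rw [HahnSeries.single_mul_single, one_mul] <;> simp

lemma NovikovAux.mulVec_map_ofPowerSeries {n : ℕ} (N : Matrix (Fin n) (Fin n) (PowerSeries A))
    (v : Fin n → PowerSeries A) :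
    (N.map (HahnSeries.ofPowerSeries ℤ A)).mulVec (fun j => HahnSeries.ofPowerSeries ℤ A (v j)) =
      fun i => HahnSeries.ofPowerSeries ℤ A (N.mulVec v i) := by
  funext i
  simp [Matrix.mulVec, dotProduct, Matrix.map_apply, map_sum]

lemma NovikovAux.central_smul_mul_smul {n : ℕ} (c c' : HahnSeries ℤ A)
    (hc' : ∀ x, c' * x = x * c') (M' M : Matrix (Fin n) (Fin n) (HahnSeries ℤ A)) :
    (c * c') • (M' * M) = (c • M') * (c' • M) := by
  ext i l : 1
  simp only [Matrix.smul_apply, Matrix.mul_apply, smul_eq_mul, Finset.mul_sum]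
  congr 1
  funext j
  rw [mul_assoc c c', ← mul_assoc c' (M' i j), hc' (M' i j), mul_assoc (M' i j), ← mul_assoc]

lemma NovikovAux.smul_mulVec {n : ℕ} (c : HahnSeries ℤ A)
    (M : Matrix (Fin n) (Fin n) (HahnSeries ℤ A)) (b : Fin n → HahnSeries ℤ A) :
    (c • M).mulVec b = fun i => c * M.mulVec b i := by
  funext i
  simp only [Matrix.mulVec, dotProduct, Matrix.smul_apply, smul_eq_mul, Finset.mul_sum,
    mul_assoc]

set_option maxHeartbeats 1000000 in
/-- Injectivity of `v ↦ N'·v` on power series vectors, when `N'` comes from an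
invertible matrix over the Novikov ring. -/
lemma NovikovAux.mulVec_injective {n k' : ℕ} {M' : Matrix (Fin n) (Fin n) (HahnSeries ℤ A)}
    (hM' : IsUnit M') {N' : Matrix (Fin n) (Fin n) (PowerSeries A)}
    (hN' : ((HahnSeries.single (1 : ℤ) (1 : A)) ^ k') • M' =
      N'.map (HahnSeries.ofPowerSeries ℤ A))
    {v w : Fin n → PowerSeries A} (h : N'.mulVec v = N'.mulVec w) : v = w := by
  set c : HahnSeries ℤ A := (HahnSeries.single (1 : ℤ) (1 : A)) ^ k' with hc
  have hcu : IsUnit c := (NovikovAux.single_isUnit (1 : ℤ)).pow k'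
  have h2 : (c • M').mulVec (fun j => HahnSeries.ofPowerSeries ℤ A (v j)) =
      (c • M').mulVec (fun j => HahnSeries.ofPowerSeries ℤ A (w j)) := by
    rw [hN', NovikovAux.mulVec_map_ofPowerSeries, NovikovAux.mulVec_map_ofPowerSeries, h]
  rw [NovikovAux.smul_mulVec, NovikovAux.smul_mulVec] at h2
  have h3 : M'.mulVec (fun j => HahnSeries.ofPowerSeries ℤ A (v j)) =
      M'.mulVec (fun j => HahnSeries.ofPowerSeries ℤ A (w j)) := by
    funext i
    exact hcu.mul_left_cancel (congrFun h2 i)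
  obtain ⟨U, hU⟩ := hM'
  have h5 : ∀ x : Fin n → HahnSeries ℤ A,
      (U⁻¹.val).mulVec (M'.mulVec x) = x := by
    intro x
    rw [Matrix.mulVec_mulVec, ← hU, Units.inv_mul, Matrix.one_mulVec]
  have h4 : (fun j => HahnSeries.ofPowerSeries ℤ A (v j)) =
      (fun j => HahnSeries.ofPowerSeries ℤ A (w j)) := by
    rw [← h5 (fun j => HahnSeries.ofPowerSeries ℤ A (v j)),
      ← h5 (fun j => HahnSeries.ofPowerSeries ℤ A (w j)), h3]
  funext j
  exact HahnSeries.ofPowerSeries_injective (congrFun h4 j)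

end Aux

/-- The quotient of the column module `A[[z]]^n` (a right `A`-module, i.e. an
`Aᵐᵒᵖ`-module) by the right submodule `{ N·v : v ∈ A[[z]]^n }`. -/
def NovikovCoker (A : Type*) [Ring A] (n : ℕ)
    (N : Matrix (Fin n) (Fin n) (PowerSeries A)) :=
  (Fin n → PowerSeries A) ⧸
    Submodule.span Aᵐᵒᵖ {w : Fin n → PowerSeries A | ∃ v, w = N.mulVec v}

noncomputable instance (A : Type*) [Ring A] (n : ℕ)
    (N : Matrix (Fin n) (Fin n) (PowerSeries A)) :
    AddCommGroup (NovikovCoker A n N) :=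
  Submodule.Quotient.addCommGroup _

instance (A : Type*) [Ring A] (n : ℕ) (N : Matrix (Fin n) (Fin n) (PowerSeries A)) :
    Module Aᵐᵒᵖ (NovikovCoker A n N) :=
  Submodule.Quotient.module _

/-- The class of `v : A[[z]]^n` in `NovikovCoker A n N`. -/
def NovikovCoker.mk {A : Type*} [Ring A] {n : ℕ}
    {N : Matrix (Fin n) (Fin n) (PowerSeries A)} (v : Fin n → PowerSeries A) :
    NovikovCoker A n N :=
  Submodule.Quotient.mk v

theorem novikov_cokernel_short_exact_sequence (A : Type*) [Ring A] (n k k' : ℕ)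
    (M M' : Matrix (Fin n) (Fin n) (HahnSeries ℤ A)) (hM : IsUnit M) (hM' : IsUnit M')
    (N N' : Matrix (Fin n) (Fin n) (PowerSeries A))
    (hN : ((HahnSeries.single (1 : ℤ) (1 : A)) ^ k) • M =
      N.map (HahnSeries.ofPowerSeries ℤ A))
    (hN' : ((HahnSeries.single (1 : ℤ) (1 : A)) ^ k') • M' =
      N'.map (HahnSeries.ofPowerSeries ℤ A)) :
    -- every entry of `z^{k+k'}·(M'·M)` lies in `A[[z]]`, with power series matrix `N'·N`
    ((HahnSeries.single (1 : ℤ) (1 : A)) ^ (k + k')) • (M' * M) =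
      (N' * N).map (HahnSeries.ofPowerSeries ℤ A) ∧
    -- the short exact sequence 0 → P → P'' → P' → 0 of right A-modules
    ∃ (f : NovikovCoker A n N →ₗ[Aᵐᵒᵖ] NovikovCoker A n (N' * N))
      (g : NovikovCoker A n (N' * N) →ₗ[Aᵐᵒᵖ] NovikovCoker A n N'),
      (∀ v : Fin n → PowerSeries A, f (NovikovCoker.mk v) = NovikovCoker.mk (N'.mulVec v)) ∧
      (∀ v : Fin n → PowerSeries A, g (NovikovCoker.mk v) = NovikovCoker.mk v) ∧
      Function.Injective f ∧ Function.Surjective g ∧ LinearMap.range f = LinearMap.ker g ∧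
      -- `f` commutes with the endomorphisms induced by multiplication by `z`
      (∀ (νP : NovikovCoker A n N →ₗ[Aᵐᵒᵖ] NovikovCoker A n N)
         (νP'' : NovikovCoker A n (N' * N) →ₗ[Aᵐᵒᵖ] NovikovCoker A n (N' * N)),
        (∀ v : Fin n → PowerSeries A,
          νP (NovikovCoker.mk v) = NovikovCoker.mk ((PowerSeries.X : PowerSeries A) • v)) →
        (∀ v : Fin n → PowerSeries A,
          νP'' (NovikovCoker.mk v) = NovikovCoker.mk ((PowerSeries.X : PowerSeries A) • v)) →
        f ∘ₗ νP = νP'' ∘ₗ f) ∧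
      -- `g` commutes with the endomorphisms induced by multiplication by `z`
      (∀ (νP'' : NovikovCoker A n (N' * N) →ₗ[Aᵐᵒᵖ] NovikovCoker A n (N' * N))
         (νP' : NovikovCoker A n N' →ₗ[Aᵐᵒᵖ] NovikovCoker A n N'),
        (∀ v : Fin n → PowerSeries A,
          νP'' (NovikovCoker.mk v) = NovikovCoker.mk ((PowerSeries.X : PowerSeries A) • v)) →
        (∀ v : Fin n → PowerSeries A,
          νP' (NovikovCoker.mk v) = NovikovCoker.mk ((PowerSeries.X : PowerSeries A) • v)) →
        g ∘ₗ νP'' = νP' ∘ₗ g) := by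
  constructor
  · -- the matrix identity
    have hcent : ∀ x : HahnSeries ℤ A,
        ((HahnSeries.single (1 : ℤ) (1 : A)) ^ k) * x =
          x * ((HahnSeries.single (1 : ℤ) (1 : A)) ^ k) := fun x =>
      (Commute.pow_left (NovikovAux.single_one_comm_s15 1 x) k).eq
    have hz : ((HahnSeries.single (1 : ℤ) (1 : A)) ^ (k + k')) =
        ((HahnSeries.single (1 : ℤ) (1 : A)) ^ k') * ((HahnSeries.single (1 : ℤ) (1 : A)) ^ k) := by
      rw [← pow_add, add_comm]
    rw [hz, NovikovAux.central_smul_mul_smul _ _ hcent M' M, hN, hN', ← Matrix.map_mul]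
  · -- the short exact sequence
    set S : Submodule Aᵐᵒᵖ (Fin n → PowerSeries A) :=
      Submodule.span Aᵐᵒᵖ {w : Fin n → PowerSeries A | ∃ v, w = N.mulVec v} with hS
    set S' : Submodule Aᵐᵒᵖ (Fin n → PowerSeries A) :=
      Submodule.span Aᵐᵒᵖ {w : Fin n → PowerSeries A | ∃ v, w = N'.mulVec v} with hS'
    set S'' : Submodule Aᵐᵒᵖ (Fin n → PowerSeries A) :=
      Submodule.span Aᵐᵒᵖ {w : Fin n → PowerSeries A | ∃ v, w = (N' * N).mulVec v} with hS''
    have hφ : S ≤ S''.comap (NovikovAux.mulVecOp N') := by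
      rw [hS, Submodule.span_le]
      rintro w ⟨v, rfl⟩
      exact Submodule.subset_span ⟨v, Matrix.mulVec_mulVec v N' N⟩
    have hg : S'' ≤ S'.comap (LinearMap.id (R := Aᵐᵒᵖ) (M := Fin n → PowerSeries A)) := by
      rw [hS'', Submodule.span_le]
      rintro w ⟨v, rfl⟩
      exact Submodule.subset_span ⟨N.mulVec v, (Matrix.mulVec_mulVec v N' N).symm⟩
    refine ⟨Submodule.mapQ S S'' (NovikovAux.mulVecOp N') hφ,
      Submodule.mapQ S'' S' LinearMap.id hg, fun v => rfl, fun v => rfl, ?_, ?_, ?_, ?_, ?_⟩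
    · -- injectivity of f
      intro x y hxy
      obtain ⟨v, rfl⟩ := Submodule.Quotient.mk_surjective S x
      obtain ⟨w, rfl⟩ := Submodule.Quotient.mk_surjective S y
      have hxy' : Submodule.Quotient.mk (p := S'') (N'.mulVec v) =
          Submodule.Quotient.mk (p := S'') (N'.mulVec w) := hxy
      have hmem := (Submodule.Quotient.eq S'').mp hxy'
      rw [hS'', NovikovAux.span_eq_range] at hmem
      obtain ⟨u, hu⟩ := hmem
      have hu' : (N' * N).mulVec u = N'.mulVec v - N'.mulVec w := hu
      have hkey : N'.mulVec v = N'.mulVec (w + N.mulVec u) := by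
        rw [Matrix.mulVec_add, Matrix.mulVec_mulVec, hu']
        abel
      have hvw := NovikovAux.mulVec_injective hM' hN' hkey
      refine (Submodule.Quotient.eq S).mpr ?_
      refine Submodule.subset_span ⟨u, ?_⟩
      rw [hvw]
      abel
    · -- surjectivity of g
      intro x
      obtain ⟨v, rfl⟩ := Submodule.Quotient.mk_surjective S' x
      exact ⟨Submodule.Quotient.mk v, rfl⟩
    · -- exactness
      ext x
      show (∃ y, _ = x) ↔ _ = 0
      constructor
      · rintro ⟨y, rfl⟩
        obtain ⟨v, rfl⟩ := Submodule.Quotient.mk_surjective S y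
        show Submodule.Quotient.mk (p := S') (N'.mulVec v) = 0
        rw [Submodule.Quotient.mk_eq_zero]
        exact Submodule.subset_span ⟨v, rfl⟩
      · intro hx
        obtain ⟨v, rfl⟩ := Submodule.Quotient.mk_surjective S'' x
        have hv : v ∈ S' := by
          rw [← Submodule.Quotient.mk_eq_zero]
          exact hx
        rw [hS', NovikovAux.span_eq_range] at hv
        obtain ⟨u, hu⟩ := hv
        refine ⟨Submodule.Quotient.mk u, ?_⟩
        show Submodule.Quotient.mk (p := S'') (N'.mulVec u) = Submodule.Quotient.mk v
        rw [show N'.mulVec u = v from hu]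
    · -- f commutes with z
      intro νP νP'' h1 h2
      apply LinearMap.ext
      intro x
      obtain ⟨v, rfl⟩ := Submodule.Quotient.mk_surjective S x
      show (Submodule.mapQ S S'' (NovikovAux.mulVecOp N') hφ) (νP (NovikovCoker.mk v)) =
        νP'' ((Submodule.mapQ S S'' (NovikovAux.mulVecOp N') hφ) (NovikovCoker.mk v))
      have hf : ∀ u : Fin n → PowerSeries A,
          (Submodule.mapQ S S'' (NovikovAux.mulVecOp N') hφ) (NovikovCoker.mk u) =
            (NovikovCoker.mk (N'.mulVec u) : NovikovCoker A n (N' * N)) := fun u => rfl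
      rw [h1 v, hf ((PowerSeries.X : PowerSeries A) • v), hf v, h2 (N'.mulVec v),
        NovikovAux.mulVec_X_smul]
    · -- g commutes with z
      intro νP'' νP' h1 h2
      apply LinearMap.ext
      intro x
      obtain ⟨v, rfl⟩ := Submodule.Quotient.mk_surjective S'' x
      show (Submodule.mapQ S'' S' LinearMap.id hg) (νP'' (NovikovCoker.mk v)) =
        νP' ((Submodule.mapQ S'' S' LinearMap.id hg) (NovikovCoker.mk v))
      have hgg : ∀ u : Fin n → PowerSeries A,
          (Submodule.mapQ S'' S' LinearMap.id hg) (NovikovCoker.mk u) =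
            (NovikovCoker.mk u : NovikovCoker A n N') := fun u => rfl
      rw [h1 v, hgg ((PowerSeries.X : PowerSeries A) • v), hgg v, h2 v]
end
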